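/- Let (C, ▷, Tr) be a guarded traced cartesian category. Define f† = Tr^X_{A,X}(⟨f, f⟩) for f : ▷X × A → X. Then † satisfies the guarded fixpoint identity: f† = f ∘ (p_X × id_A) ∘ ⟨f†, id_A⟩. -/

import Mathlib

open CategoryTheory CategoryTheory.Limits

set_option maxHeartbeats 1000000 in
/-- In a guarded traced cartesian category `(C, ▷, Tr)` (axioms: left/right tightening,
sliding, vanishing I & II, superposing, yanking), the operator `f† = Tr^X_{A,X}⟨f, f⟩`
satisfies the guarded fixpoint identity `f† = f ∘ (p_X × id_A) ∘ ⟨f†, id_A⟩`. -/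
theorem stmt11 {C : Type*} [Category C] [HasFiniteProducts C]
    (F : C ⥤ C) (p : 𝟭 C ⟶ F)
    (Tr : ∀ {X A B : C}, (F.obj X ⨯ A ⟶ X ⨯ B) → (A ⟶ B))
    (hleft : ∀ {X A A' B : C} (f : F.obj X ⨯ A ⟶ X ⨯ B) (g : A' ⟶ A),
      Tr (prod.map (𝟙 (F.obj X)) g ≫ f) = g ≫ Tr f)
    (hright : ∀ {X A B B' : C} (f : F.obj X ⨯ A ⟶ X ⨯ B) (g : B ⟶ B'),
      Tr (f ≫ prod.map (𝟙 X) g) = Tr f ≫ g)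
    (hslide : ∀ {X X' A B : C} (f : F.obj X ⨯ A ⟶ X' ⨯ B) (g : X' ⟶ X),
      Tr (f ≫ prod.map g (𝟙 B)) = Tr (prod.map (F.map g) (𝟙 A) ≫ f))
    (hvan1 : ∀ {A B : C} (f : F.obj (⊤_ C) ⨯ A ⟶ (⊤_ C) ⨯ B),
      Tr f = prod.lift (terminal.from A ≫ p.app (⊤_ C)) (𝟙 A) ≫ f ≫ prod.snd)
    (hvan2 : ∀ {X Y A B : C} (f : F.obj X ⨯ (F.obj Y ⨯ A) ⟶ X ⨯ (Y ⨯ B)),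
      Tr (Tr f) =
        Tr (prod.map (prod.lift (F.map prod.fst) (F.map prod.snd)) (𝟙 A) ≫
          (prod.associator (F.obj X) (F.obj Y) A).hom ≫ f ≫ (prod.associator X Y B).inv))
    (hsuper : ∀ {X A B D : C} (f : F.obj X ⨯ A ⟶ X ⨯ B),
      Tr ((prod.associator (F.obj X) A D).inv ≫ prod.map f (𝟙 D) ≫
          (prod.associator X B D).hom)
        = prod.map (Tr f) (𝟙 D))
    (hyank : ∀ X : C,
      Tr (prod.lift (prod.snd : F.obj X ⨯ X ⟶ X) prod.fst) = p.app X) :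
    ∀ {X A : C} (f : F.obj X ⨯ A ⟶ X),
      Tr (prod.lift f f) =
        prod.lift (Tr (prod.lift f f)) (𝟙 A) ≫ prod.map (p.app X) (𝟙 A) ≫ f := by
  intro X A f
  set t := Tr (prod.lift f f) with ht
  -- Step A : Tr ⟨f, snd⟩ = 𝟙 A  (superposing + tightening)
  have hA : Tr (prod.lift f (prod.snd : F.obj X ⨯ A ⟶ A)) = 𝟙 A := by
    have hd : prod.lift f (prod.snd : F.obj X ⨯ A ⟶ A)
        = prod.map (𝟙 (F.obj X)) (prod.lift (𝟙 A) (𝟙 A)) ≫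
          (((prod.associator (F.obj X) A A).inv ≫
            prod.map (prod.lift f (terminal.from (F.obj X ⨯ A))) (𝟙 A) ≫
            (prod.associator X (⊤_ C) A).hom) ≫
            prod.map (𝟙 X) (prod.snd : (⊤_ C) ⨯ A ⟶ A)) := by
      apply Limits.prod.hom_ext <;>
        simp [Limits.prod.associator, prod.comp_lift_assoc, prod.lift_fst_assoc, prod.lift_fst, prod.lift_snd,
          prod.lift_snd_assoc, prod.map_fst_assoc, prod.map_snd_assoc]
    rw [hd, hleft, hright, hsuper]
    simp [prod.lift_snd]
  -- Step B : Tr ⟨f, fst⟩ = t ≫ p.app X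
  have hB : Tr (prod.lift f (prod.fst : F.obj X ⨯ A ⟶ F.obj X)) = t ≫ p.app X := by
    -- the common middle trace at state X ⨯ X
    set g : F.obj (X ⨯ X) ⨯ A ⟶ X :=
      prod.lift (prod.fst ≫ F.map (prod.fst : X ⨯ X ⟶ X)) prod.snd ≫ f with hg
    set m : F.obj (X ⨯ X) ⨯ A ⟶ (X ⨯ X) ⨯ F.obj X :=
      prod.lift (prod.lift g g) (prod.fst ≫ F.map (prod.snd : X ⨯ X ⟶ X)) with hm
    -- B1 : Tr ⟨f, fst⟩ = Tr m  (sliding along the diagonal)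
    have hB1 : Tr (prod.lift f (prod.fst : F.obj X ⨯ A ⟶ F.obj X)) = Tr m := by
      have hs := hslide
        (prod.lift g (prod.fst ≫ F.map (prod.snd : X ⨯ X ⟶ X))
          : F.obj (X ⨯ X) ⨯ A ⟶ X ⨯ F.obj X)
        (prod.lift (𝟙 X) (𝟙 X))
      have e1 : (prod.lift g (prod.fst ≫ F.map (prod.snd : X ⨯ X ⟶ X))) ≫
          prod.map (prod.lift (𝟙 X) (𝟙 X)) (𝟙 (F.obj X)) = m := by
        apply Limits.prod.hom_ext <;> simp [hm]
      have e2 : prod.map (F.map (prod.lift (𝟙 X) (𝟙 X))) (𝟙 A) ≫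
          (prod.lift g (prod.fst ≫ F.map (prod.snd : X ⨯ X ⟶ X)))
          = prod.lift f (prod.fst : F.obj X ⨯ A ⟶ F.obj X) := by
        apply Limits.prod.hom_ext <;>
        · simp only [hg, Category.assoc, prod.lift_fst, prod.lift_snd,
            prod.lift_fst_assoc, prod.lift_snd_assoc, prod.map_fst, prod.map_snd,
            prod.map_fst_assoc, prod.map_snd_assoc, prod.comp_lift,
            prod.comp_lift_assoc, Category.comp_id, Category.id_comp,
            ← Functor.map_comp_assoc, ← Functor.map_comp]
          simp
      rw [← e2, ← hs, e1]
    -- the auxiliary morphism for Vanishing II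
    set f' : F.obj X ⨯ (F.obj X ⨯ A) ⟶ X :=
      prod.lift prod.fst (prod.snd ≫ prod.snd) ≫ f with hf'
    set w : F.obj X ⨯ (F.obj X ⨯ A) ⟶ X ⨯ (X ⨯ F.obj X) :=
      prod.lift f' (prod.lift f' (prod.snd ≫ prod.fst)) with hw
    -- B2 : Tr (Tr w) = Tr m  (Vanishing II)
    have hB2 : Tr (Tr w) = Tr m := by
      rw [hvan2 w]
      congr 1
      apply Limits.prod.hom_ext
      · apply Limits.prod.hom_ext <;>
          simp [hw, hf', hm, hg, Limits.prod.associator, prod.comp_lift_assoc, prod.lift_fst, prod.lift_snd,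
            prod.lift_fst_assoc, prod.lift_snd_assoc, prod.map_fst_assoc,
            prod.map_snd_assoc]
      · simp [hw, hf', hm, Limits.prod.associator, prod.comp_lift_assoc, prod.lift_fst, prod.lift_snd,
          prod.lift_fst_assoc, prod.lift_snd_assoc, prod.map_fst_assoc,
          prod.map_snd_assoc]
    -- B3 : Tr w = ⟨snd ≫ t, fst⟩  (superposing)
    have hB3 : Tr w = prod.lift ((prod.snd : F.obj X ⨯ A ⟶ A) ≫ t) prod.fst := by
      have hd : w = prod.map (𝟙 (F.obj X))
            (prod.lift (prod.snd : F.obj X ⨯ A ⟶ A) prod.fst) ≫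
          ((prod.associator (F.obj X) A (F.obj X)).inv ≫
            prod.map (prod.lift f f) (𝟙 (F.obj X)) ≫
            (prod.associator X X (F.obj X)).hom) := by
        apply Limits.prod.hom_ext
        · simp [hw, hf', Limits.prod.associator, prod.comp_lift_assoc, prod.lift_fst, prod.lift_snd,
            prod.lift_fst_assoc, prod.lift_snd_assoc, prod.map_fst_assoc,
            prod.map_snd_assoc]
        · apply Limits.prod.hom_ext <;>
            simp [hw, hf', Limits.prod.associator, prod.comp_lift_assoc, prod.lift_fst, prod.lift_snd,
              prod.lift_fst_assoc, prod.lift_snd_assoc, prod.map_fst_assoc,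
              prod.map_snd_assoc]
      rw [hd, hleft, hsuper, ← ht]
      apply Limits.prod.hom_ext <;> simp
    -- B4 : Tr ⟨snd ≫ t, fst⟩ = t ≫ p.app X  (yanking)
    have hB4 : Tr (prod.lift ((prod.snd : F.obj X ⨯ A ⟶ A) ≫ t) prod.fst)
        = t ≫ p.app X := by
      have hd : prod.lift ((prod.snd : F.obj X ⨯ A ⟶ A) ≫ t) prod.fst
          = prod.map (𝟙 (F.obj X)) t ≫
            prod.lift (prod.snd : F.obj X ⨯ X ⟶ X) prod.fst := by
        apply Limits.prod.hom_ext <;> simp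
      rw [hd, hleft, hyank]
    rw [hB1, ← hB2, hB3, hB4]
  -- Assemble
  have hsplit : Tr (prod.lift f (𝟙 (F.obj X ⨯ A)))
      = prod.lift (Tr (prod.lift f (prod.fst : F.obj X ⨯ A ⟶ F.obj X)))
          (Tr (prod.lift f (prod.snd : F.obj X ⨯ A ⟶ A))) := by
    apply Limits.prod.hom_ext
    · rw [prod.lift_fst, ← hright]
      congr 1
      apply Limits.prod.hom_ext <;> simp
    · rw [prod.lift_snd, ← hright]
      congr 1
      apply Limits.prod.hom_ext <;> simp
  have hmain : t = Tr (prod.lift f (𝟙 (F.obj X ⨯ A))) ≫ f := by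
    rw [ht, ← hright]
    congr 1
    apply Limits.prod.hom_ext <;> simp
  calc t = Tr (prod.lift f (𝟙 (F.obj X ⨯ A))) ≫ f := hmain
    _ = prod.lift (t ≫ p.app X) (𝟙 A) ≫ f := by rw [hsplit, hA, hB]
    _ = prod.lift t (𝟙 A) ≫ prod.map (p.app X) (𝟙 A) ≫ f := by
        rw [prod.lift_map_assoc, Category.comp_id]
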